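/- arXiv:1609.05074 — 2 statements merged into one kernel-verified Lean document; each statement's English description precedes it below -/
import Mathlib

section
/- For every c > 1 there exists N such that for all n ≥ N, setting λ = 2n - c and G = (n+1)²λ²/(2n²(n+3)), the determinant of the matrix [[G, (n+1)λ], [(n+1)λ, 2n²(n+3)]] is negative, i.e. G · 2n²(n+3) < (n+1)²λ². -/
set_option maxHeartbeats 2000000

noncomputable def Qaux (c x : ℝ) : ℝ :=
  (64) + (-64)*c + (384)*x + (-384)*x*c + (192)*x*c^2 + (352)*x^2 + (-1088)*x^2*c + (792)*x^2*c^2 + (-224)*x^2*c^3 + (-576)*x^3 + (-1008)*x^3*c + (1184)*x^3*c^2 + (-780)*x^3*c^3 + (128)*x^3*c^4 + (576)*x^4 + (1440)*x^4*c + (1016)*x^4*c^2 + (-600)*x^4*c^3 + (402)*x^4*c^4 + (-36)*x^4*c^5 + (-832)*x^5 + (-576)*x^5*c + (-1568)*x^5*c^2 + (-356)*x^5*c^3 + (112)*x^5*c^4 + (-105)*x^5*c^5 + (4)*x^5*c^6 + (32)*x^6 + (1760)*x^6*c + (-472)*x^6*c^2 + (1040)*x^6*c^3 + (-60)*x^6*c^4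 + (14)*x^6*c^5 + (11)*x^6*c^6 + (-80)*x^7*c + (-1216)*x^7*c^2 + (652)*x^7*c^3 + (-396)*x^7*c^4 + (68)*x^7*c^5 + (-6)*x^7*c^6 + (72)*x^8*c^2 + (296)*x^8*c^3 + (-186)*x^8*c^4 + (58)*x^8*c^5 + (-12)*x^8*c^6 + (-28)*x^9*c^3 + (-4)*x^9*c^4 + (5)*x^9*c^5 + (2)*x^9*c^6 + (4)*x^10*c^4 + (-4)*x^10*c^5 + (1)*x^10*c^6

lemma aux_neg (E P num : ℝ) (hP : 0 < P) (hnum : num < 0) (h : E * P = num) : E < 0 := by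
  by_contra hcon
  push_neg at hcon
  nlinarith [mul_nonneg hcon hP.le]

theorem stmt_17 (c : ℝ) (hc : 1 < c) :
    ∃ N : ℕ, ∀ n : ℕ, N ≤ n → ∀ lam F G : ℝ,
      lam = 2 * (n : ℝ) - c →
      F = ((n : ℝ) + 1) ^ 2 * lam ^ 2 /
          ((n : ℝ) * (((n : ℝ) + 1) * lam - 2 * ((n : ℝ) - 1))) →
      G = ((n : ℝ) + 1) ^ 2 * lam ^ 2 / (2 * (n : ℝ) ^ 2 * ((n : ℝ) + 3)) →
      (!![(n : ℝ) * ((n : ℝ) - 1) * lam * (lam - (n : ℝ)) * (lam - 2 * ((n : ℝ) - 1)),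
            -2 * ((n : ℝ) - 1) * lam * (lam - (n : ℝ));
          -2 * ((n : ℝ) - 1) * lam * (lam - (n : ℝ)),
            (2 * (n : ℝ) + 6) * lam + 2 * lam * (lam - ((n : ℝ) - 1)) - F - G]).det < 0 := by
  obtain ⟨N0, hN0⟩ : ∃ N0 : ℕ, ∀ n ≥ N0, Qaux c (1/(n:ℝ)) < 0 := by
    have hcont : Continuous (Qaux c) := by unfold Qaux; fun_prop
    have ht : Filter.Tendsto (fun n : ℕ => Qaux c (1/(n:ℝ))) Filter.atTop (nhds (Qaux c 0)) :=
      (hcont.tendsto 0).comp tendsto_one_div_atTop_nhds_zero_nat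
    have h0 : Qaux c 0 < 0 := by simp only [Qaux]; ring_nf; nlinarith
    exact Filter.eventually_atTop.mp (ht.eventually_lt_const h0)
  refine ⟨max N0 (⌈c⌉₊ + 1), fun n hn lam F G hlam hF hG => ?_⟩
  have hcn : c < (n : ℝ) := by
    have h1 : (⌈c⌉₊ + 1 : ℕ) ≤ n := le_trans (le_max_right _ _) hn
    calc c ≤ (⌈c⌉₊ : ℝ) := Nat.le_ceil c
    _ < ((⌈c⌉₊ + 1 : ℕ) : ℝ) := by push_cast; linarith
    _ ≤ (n : ℝ) := by exact_mod_cast h1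
  have hn1 : (1:ℝ) < (n:ℝ) := lt_trans hc hcn
  have hn0 : (n:ℝ) ≠ 0 := by linarith
  subst hlam hF hG
  have hFd : 0 < (n:ℝ) * (((n:ℝ)+1) * (2*(n:ℝ)-c) - 2*((n:ℝ)-1)) := by nlinarith [mul_lt_mul_of_pos_right hcn (show (0:ℝ) < (n:ℝ) by linarith)]
  have hGd : 0 < 2 * (n:ℝ)^2 * ((n:ℝ)+3) := by nlinarith
  have hQ : Qaux c (1/(n:ℝ)) < 0 := hN0 n (le_trans (le_max_left _ _) hn)
  have hnum : (-64)*(n:ℝ)^12*c + (64)*(n:ℝ)^12 + (192)*(n:ℝ)^11*c^2 + (-384)*(n:ℝ)^11*c + (384)*(n:ℝ)^11 + (-224)*(n:ℝ)^10*c^3 + (792)*(n:ℝ)^10*c^2 + (-1088)*(n:ℝ)^10*c + (352)*(n:ℝ)^10 + (128)*(n:ℝ)^9*c^4 + (-780)*(n:ℝ)^9*c^3 + (1184)*(n:ℝ)^9*c^2 + (-1008)*(n:ℝ)^9*c + (-576)*(n:ℝ)^9 + (-36)*(n:ℝ)^8*c^5 + (402)*(n:ℝ)^8*c^4 + (-600)*(n:ℝ)^8*c^3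 + (1016)*(n:ℝ)^8*c^2 + (1440)*(n:ℝ)^8*c + (576)*(n:ℝ)^8 + (4)*(n:ℝ)^7*c^6 + (-105)*(n:ℝ)^7*c^5 + (112)*(n:ℝ)^7*c^4 + (-356)*(n:ℝ)^7*c^3 + (-1568)*(n:ℝ)^7*c^2 + (-576)*(n:ℝ)^7*c + (-832)*(n:ℝ)^7 + (11)*(n:ℝ)^6*c^6 + (14)*(n:ℝ)^6*c^5 + (-60)*(n:ℝ)^6*c^4 + (1040)*(n:ℝ)^6*c^3 + (-472)*(n:ℝ)^6*c^2 + (1760)*(n:ℝ)^6*c + (32)*(n:ℝ)^6 + (-6)*(n:ℝ)^5*c^6 + (68)*(n:ℝ)^5*c^5 + (-396)*(n:ℝ)^5*c^4 + (652)*(n:ℝ)^5*c^3 + (-1216)*(n:ℝ)^5*c^2 + (-80)*(n:ℝ)^5*c + (-12)*(n:ℝ)^4*c^6 + (58)*(n:ℝ)^4*c^5 + (-186)*(n:ℝ)^4*c^4 + (296)*(n:ℝ)^4*c^3 + (72)*(n:ℝ)^4*c^2 + (2)*(n:ℝ)^3*c^6 + (5)*(n:ℝ)^3*c^5 + (-4)*(n:ℝ)^3*c^4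 + (-28)*(n:ℝ)^3*c^3 + (1)*(n:ℝ)^2*c^6 + (-4)*(n:ℝ)^2*c^5 + (4)*(n:ℝ)^2*c^4 < 0 := by
    have heq : (-64)*(n:ℝ)^12*c + (64)*(n:ℝ)^12 + (192)*(n:ℝ)^11*c^2 + (-384)*(n:ℝ)^11*c + (384)*(n:ℝ)^11 + (-224)*(n:ℝ)^10*c^3 + (792)*(n:ℝ)^10*c^2 + (-1088)*(n:ℝ)^10*c + (352)*(n:ℝ)^10 + (128)*(n:ℝ)^9*c^4 + (-780)*(n:ℝ)^9*c^3 + (1184)*(n:ℝ)^9*c^2 + (-1008)*(n:ℝ)^9*c + (-576)*(n:ℝ)^9 + (-36)*(n:ℝ)^8*c^5 + (402)*(n:ℝ)^8*c^4 + (-600)*(n:ℝ)^8*c^3 + (1016)*(n:ℝ)^8*c^2 + (1440)*(n:ℝ)^8*c + (576)*(n:ℝ)^8 + (4)*(n:ℝ)^7*c^6 + (-105)*(n:ℝ)^7*c^5 + (112)*(n:ℝ)^7*c^4 + (-356)*(n:ℝ)^7*c^3 + (-1568)*(n:ℝ)^7*c^2 + (-576)*(n:ℝ)^7*c + (-832)*(n:ℝ)^7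 + (11)*(n:ℝ)^6*c^6 + (14)*(n:ℝ)^6*c^5 + (-60)*(n:ℝ)^6*c^4 + (1040)*(n:ℝ)^6*c^3 + (-472)*(n:ℝ)^6*c^2 + (1760)*(n:ℝ)^6*c + (32)*(n:ℝ)^6 + (-6)*(n:ℝ)^5*c^6 + (68)*(n:ℝ)^5*c^5 + (-396)*(n:ℝ)^5*c^4 + (652)*(n:ℝ)^5*c^3 + (-1216)*(n:ℝ)^5*c^2 + (-80)*(n:ℝ)^5*c + (-12)*(n:ℝ)^4*c^6 + (58)*(n:ℝ)^4*c^5 + (-186)*(n:ℝ)^4*c^4 + (296)*(n:ℝ)^4*c^3 + (72)*(n:ℝ)^4*c^2 + (2)*(n:ℝ)^3*c^6 + (5)*(n:ℝ)^3*c^5 + (-4)*(n:ℝ)^3*c^4 + (-28)*(n:ℝ)^3*c^3 + (1)*(n:ℝ)^2*c^6 + (-4)*(n:ℝ)^2*c^5 + (4)*(n:ℝ)^2*c^4 = (n:ℝ)^12 * Qaux c (1/(n:ℝ)) := by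
      unfold Qaux; field_simp; ring
    rw [heq]
    exact mul_neg_of_pos_of_neg (by positivity) hQ
  rw [Matrix.det_fin_two_of]
  refine aux_neg _ (((n:ℝ) * (((n:ℝ)+1) * (2*(n:ℝ)-c) - 2*((n:ℝ)-1))) * (2 * (n:ℝ)^2 * ((n:ℝ)+3))) _ (mul_pos hFd hGd) hnum ?_
  have hD : ((n:ℝ)+1) * (2*(n:ℝ)-c) - 2*((n:ℝ)-1) ≠ 0 := by
    intro h; rw [h, mul_zero] at hFd; exact lt_irrefl _ hFd
  set D := ((n:ℝ)+1) * (2*(n:ℝ)-c) - 2*((n:ℝ)-1) with hDdef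
  field_simp
  rw [hDdef]
  ring
end

section
/- Let n ≥ 4 and λ > 0 with n < λ < 2n - (n/2)(√(1+8/n) - 1), and set μ = -(n-1)/2 + √((n-1)²/4 + λ) and λ̃ = λ + μ. Then n + 1 < λ̃ < 2n, and consequently n(λ̃ - n - 1)(λ̃ - 2n)(λ̃ - n) < 0. -/
set_option maxHeartbeats 1000000 in
theorem stmt_19 (n : ℕ) (hn : 4 ≤ n) (lam : ℝ) (h1 : (n : ℝ) < lam)
    (h2 : lam < 2 * (n : ℝ) - ((n : ℝ) / 2) * (Real.sqrt (1 + 8 / (n : ℝ)) - 1))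
    (μ lamt : ℝ)
    (hμ : μ = -((n : ℝ) - 1) / 2 + Real.sqrt (((n : ℝ) - 1) ^ 2 / 4 + lam))
    (hlt : lamt = lam + μ) :
    ((n : ℝ) + 1 < lamt ∧ lamt < 2 * (n : ℝ)) ∧
    (n : ℝ) * (lamt - (n : ℝ) - 1) * (lamt - 2 * (n : ℝ)) * (lamt - (n : ℝ)) < 0 := by
  have hN : (4:ℝ) ≤ (n:ℝ) := by exact_mod_cast hn
  set N := (n:ℝ) with hNdef
  have hN0 : (0:ℝ) < N := by linarith
  set r := Real.sqrt (1 + 8/N) with hrdef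
  have hr : r ^ 2 = 1 + 8/N := Real.sq_sqrt (by positivity)
  have hr0 : 0 ≤ r := Real.sqrt_nonneg _
  have hr1 : 1 < r := by
    nlinarith [div_pos (by norm_num : (0:ℝ) < 8) hN0]
  have hlam2N : lam < 2*N := by nlinarith
  have ht0 : 0 < 2*N - lam := by linarith
  have htlb : (N/2)*(r - 1) < 2*N - lam := by linarith
  have h6 : N * r^2 = N + 8 := by
    have := hr
    field_simp at this
    linarith
  have hfac : 0 < ((2*N-lam) - N/2*(r-1)) * ((2*N-lam) + N/2*(r-1) + N) :=
    mul_pos (by linarith) (by nlinarith)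
  have hkey : 2*N < (2*N - lam)^2 + N*(2*N - lam) := by nlinarith [h6, hfac]
  set s := Real.sqrt ((N-1)^2/4 + lam) with hsdef
  have hs2 : s^2 = (N-1)^2/4 + lam := Real.sq_sqrt (by nlinarith)
  have hs0 : 0 ≤ s := Real.sqrt_nonneg _
  have hslb : (N+1)/2 < s := by
    rw [hsdef, show ((N-1)^2/4 + lam) = (N-1)^2/4 + lam from rfl]
    rw [Real.lt_sqrt (by linarith)]
    nlinarith
  have hsub : s < (2*N - lam) + (N-1)/2 := by
    rw [hsdef, Real.sqrt_lt' (by linarith)]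
    nlinarith [hkey]
  have hlow : N + 1 < lamt := by rw [hlt, hμ]; linarith
  have hhigh : lamt < 2*N := by rw [hlt, hμ]; linarith
  refine ⟨⟨hlow, hhigh⟩, ?_⟩
  have h3 : 0 < lamt - N - 1 := by linarith
  have h4 : lamt - 2*N < 0 := by linarith
  have h5 : 0 < lamt - N := by linarith
  nlinarith [mul_pos (mul_pos hN0 h3) h5]
end
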